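/- Let 𝒜 be an almost disjoint family on ω and let K₀, K₁ be disjoint subsets of the Ψ-space Ψ(𝒜), where K₀ is regular closed and K₁ is π-closed. If at least one of the sets K₀ ∩ 𝒜, K₁ ∩ 𝒜 is finite, then there is a clopen set U ⊆ Ψ(𝒜) with K₀ ⊆ U and U ∩ K₁ = ∅. -/

import Mathlib

open Set

/-- `A ⊆* D`: `A \ D` is finite. -/
def AlmostSubset (A D : Set ℕ) : Prop := (A \ D).Finite

/-- An almost disjoint family: a family of infinite subsets of `ℕ` any two distinct
members of which have finite intersection. -/
def AlmostDisjointFam (𝒜 : Set (Set ℕ)) : Prop :=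
  (∀ A ∈ 𝒜, A.Infinite) ∧ ∀ A ∈ 𝒜, ∀ B ∈ 𝒜, A ≠ B → (A ∩ B).Finite

/-- A maximal almost disjoint (MAD) family. -/
def MADFam (𝒜 : Set (Set ℕ)) : Prop :=
  AlmostDisjointFam 𝒜 ∧ ∀ X : Set ℕ, X.Infinite → ∃ A ∈ 𝒜, (A ∩ X).Infinite

/-- `D` is a partitioner for the family `𝒜`. -/
def IsPartitioner (𝒜 : Set (Set ℕ)) (D : Set ℕ) : Prop :=
  ∀ A ∈ 𝒜, AlmostSubset A D ∨ (A ∩ D).Finite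

/-- The topology of the Ψ-space `Ψ(𝒜)` on the set `ℕ ⊕ ↥𝒜`: points of `ℕ` are isolated
and the sets `{A} ∪ (A \ F)`, `F` finite, form a neighbourhood base at `A ∈ 𝒜`. -/
def psiTop (𝒜 : Set (Set ℕ)) : TopologicalSpace (ℕ ⊕ ↥𝒜) where
  IsOpen U := ∀ A : ↥𝒜, Sum.inr A ∈ U → ((A : Set ℕ) \ {n | Sum.inl n ∈ U}).Finite
  isOpen_univ := by intro A _; simp
  isOpen_inter := by
    intro U V hU hV A hA
    apply ((hU A hA.1).union (hV A hA.2)).subset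
    rintro n ⟨hnA, hn⟩
    by_cases hU' : Sum.inl n ∈ U
    · exact Or.inr ⟨hnA, fun hV' => hn ⟨hU', hV'⟩⟩
    · exact Or.inl ⟨hnA, hU'⟩
  isOpen_sUnion := by
    intro S hS A hA
    obtain ⟨U, hU, hAU⟩ := Set.mem_sUnion.mp hA
    apply (hS U hU A hAU).subset
    rintro n ⟨hnA, hn⟩
    exact ⟨hnA, fun h => hn (Set.mem_sUnion.mpr ⟨U, hU, h⟩)⟩

/-- A set is regular closed if it is the closure of its interior. -/
def IsRegClosed {X : Type*} [TopologicalSpace X] (K : Set X) : Prop :=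
  closure (interior K) = K

/-- A set is π-closed if it is a finite intersection of regular closed sets. -/
def IsPiClosed {X : Type*} [TopologicalSpace X] (K : Set X) : Prop :=
  ∃ (n : ℕ) (f : Fin n → Set X), (∀ i, IsRegClosed (f i)) ∧ K = ⋂ i, f i

/-- A space is almost-normal if any two disjoint closed sets, one of which is regular
closed, can be separated by disjoint open sets. -/
def AlmostNormalSp (X : Type*) [TopologicalSpace X] : Prop :=
  ∀ C K : Set X, IsClosed C → IsClosed K → IsRegClosed K → Disjoint C K →
    ∃ U V : Set X, IsOpen U ∧ IsOpen V ∧ C ⊆ U ∧ K ⊆ V ∧ Disjoint U V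

/-- A space is partly-normal if any two disjoint closed sets, one regular closed and the
other π-closed, can be separated by disjoint open sets. -/
def PartlyNormalSp (X : Type*) [TopologicalSpace X] : Prop :=
  ∀ K₀ K₁ : Set X, IsRegClosed K₀ → IsPiClosed K₁ → Disjoint K₀ K₁ →
    ∃ U V : Set X, IsOpen U ∧ IsOpen V ∧ K₀ ⊆ U ∧ K₁ ⊆ V ∧ Disjoint U V

/-- A space is quasi-normal if any two disjoint π-closed sets can be separated by
disjoint open sets. -/
def QuasiNormalSp (X : Type*) [TopologicalSpace X] : Prop :=
  ∀ K₀ K₁ : Set X, IsPiClosed K₀ → IsPiClosed K₁ → Disjoint K₀ K₁ →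
    ∃ U V : Set X, IsOpen U ∧ IsOpen V ∧ K₀ ⊆ U ∧ K₁ ⊆ V ∧ Disjoint U V

/-- `D^0 = D` and `D^1 = ℕ \ D`. -/
def boolPart (D : Set ℕ) : Bool → Set ℕ
  | false => D
  | true => Dᶜ

/-- Two sets are equal modulo a finite set. -/
def EqModFin (X Y : Set ℕ) : Prop := ((X \ Y) ∪ (Y \ X)).Finite

/-- A nice family of partitioners for `𝒜`. -/
def NiceFamily (𝒜 𝒟 : Set (Set ℕ)) : Prop :=
  (∀ D ∈ 𝒟, IsPartitioner 𝒜 D) ∧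
  ∀ (n : ℕ) (Ds : Fin n → Set ℕ), (∀ i, Ds i ∈ 𝒟) → ∀ f : Fin n → Bool,
    {A | A ∈ 𝒜 ∧ AlmostSubset A (⋂ i, boolPart (Ds i) (f i))}.Finite →
    EqModFin (⋂ i, boolPart (Ds i) (f i))
      (⋃₀ {A | A ∈ 𝒜 ∧ AlmostSubset A (⋂ i, boolPart (Ds i) (f i))})

/-- `𝒜` is strongly ℵ₀-separated. -/
def StronglyAleph0Separated (𝒜 : Set (Set ℕ)) : Prop :=
  ∀ ℬ 𝒞 : Set (Set ℕ), ℬ ⊆ 𝒜 → 𝒞 ⊆ 𝒜 → ℬ.Countable → 𝒞.Countable → Disjoint ℬ 𝒞 →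
    ∃ D : Set ℕ, IsPartitioner 𝒜 D ∧ (∀ B ∈ ℬ, AlmostSubset B D) ∧
      ∀ C ∈ 𝒞, (C ∩ D).Finite

/-- `𝒜` is weakly separated. -/
def WeaklySeparated (𝒜 : Set (Set ℕ)) : Prop :=
  ∀ ℬ 𝒞 : Set (Set ℕ), ℬ ⊆ 𝒜 → 𝒞 ⊆ 𝒜 → Disjoint ℬ 𝒞 →
    ∃ D : Set ℕ, D.Infinite ∧ (∀ B ∈ ℬ, (D ∩ B).Infinite) ∧ ∀ C ∈ 𝒞, (D ∩ C).Finite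


/-- If `C` is closed in `Ψ(𝒜)` and `A ∈ 𝒜` is not in `C`, then `A` meets the set of
natural-number points of `C` only finitely. -/
theorem psi_closed_inter_fin (𝒜 : Set (Set ℕ)) (C : Set (ℕ ⊕ ↥𝒜))
    (hC : @IsClosed _ (psiTop 𝒜) C) (A : ↥𝒜) (hA : Sum.inr A ∉ C) :
    ((A : Set ℕ) ∩ {n | Sum.inl n ∈ C}).Finite := by
  have h := hC.isOpen_compl A hA
  apply h.subset
  intro n hn
  exact ⟨hn.1, fun h' => h' hn.2⟩

/-- If `C`, `K` are disjoint closed sets in `Ψ(𝒜)` and `K` contains only finitely many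
points of `𝒜`, then there is a clopen set containing `K` and disjoint from `C`. -/
theorem psi_sep_lemma (𝒜 : Set (Set ℕ)) (h𝒜 : AlmostDisjointFam 𝒜)
    (C K : Set (ℕ ⊕ ↥𝒜)) (hd : Disjoint C K)
    (hC : @IsClosed _ (psiTop 𝒜) C) (hK : @IsClosed _ (psiTop 𝒜) K)
    (hfin : {A : ↥𝒜 | Sum.inr A ∈ K}.Finite) :
    ∃ U : Set (ℕ ⊕ ↥𝒜), @IsOpen _ (psiTop 𝒜) U ∧ @IsClosed _ (psiTop 𝒜) U ∧
      K ⊆ U ∧ Disjoint U C := by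
  classical
  letI := psiTop 𝒜
  set ℬ : Set ↥𝒜 := {A : ↥𝒜 | Sum.inr A ∈ K} with hℬ
  set N : Set ℕ :=
    ({n | Sum.inl n ∈ K} ∪ ⋃ A ∈ ℬ, (A : Set ℕ)) \ {n | Sum.inl n ∈ C} with hN
  refine ⟨Sum.elim (· ∈ N) (· ∈ ℬ), ?_, ?_, ?_, ?_⟩
  · -- open
    intro A hA
    have hA' : A ∈ ℬ := hA
    have h1 : ((A : Set ℕ) ∩ {n | Sum.inl n ∈ C}).Finite :=
      psi_closed_inter_fin 𝒜 C hC A (fun h => (Set.disjoint_left.mp hd h) hA')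
    apply h1.subset
    intro n hn
    refine ⟨hn.1, ?_⟩
    by_contra h
    exact hn.2 ⟨Or.inr (Set.mem_biUnion hA' hn.1), h⟩
  · -- closed
    refine isOpen_compl_iff.mp ?_
    intro B hB
    have hB' : B ∉ ℬ := hB
    have h1 : ((B : Set ℕ) ∩ {n | Sum.inl n ∈ K}).Finite :=
      psi_closed_inter_fin 𝒜 K hK B hB'
    have h2 : ((B : Set ℕ) ∩ ⋃ A ∈ ℬ, (A : Set ℕ)).Finite := by
      rw [Set.inter_iUnion₂]
      apply Set.Finite.biUnion hfin
      intro A hA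
      exact h𝒜.2 B B.2 A A.2 (fun h => hB' (by rwa [Subtype.ext h]))
    apply (h1.union h2).subset
    intro n hn
    have hnN : n ∈ N := by
      by_contra h
      exact hn.2 h
    rcases hnN.1 with h | h
    · exact Or.inl ⟨hn.1, h⟩
    · exact Or.inr ⟨hn.1, h⟩
  · -- K ⊆ U
    rintro (n | A) hx
    · exact ⟨Or.inl hx, fun h => Set.disjoint_left.mp hd h hx⟩
    · exact hx
  · -- disjoint
    refine Set.disjoint_left.mpr ?_
    rintro (n | A) hx hC'
    · exact hx.2 hC'
    · exact Set.disjoint_left.mp hd hC' hx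

/-- If `K₀` is regular closed, `K₁` is π-closed, they are disjoint, and one
of them contains only finitely many points of `𝒜`, then they can be separated by a
clopen set. -/
theorem statement10 (𝒜 : Set (Set ℕ)) (h𝒜 : AlmostDisjointFam 𝒜)
    (K₀ K₁ : Set (ℕ ⊕ ↥𝒜)) (hd : Disjoint K₀ K₁)
    (h0 : @IsRegClosed (ℕ ⊕ ↥𝒜) (psiTop 𝒜) K₀)
    (h1 : @IsPiClosed (ℕ ⊕ ↥𝒜) (psiTop 𝒜) K₁)
    (hfin : {A : ↥𝒜 | Sum.inr A ∈ K₀}.Finite ∨ {A : ↥𝒜 | Sum.inr A ∈ K₁}.Finite) :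
    ∃ U : Set (ℕ ⊕ ↥𝒜), @IsOpen (ℕ ⊕ ↥𝒜) (psiTop 𝒜) U ∧
      @IsClosed (ℕ ⊕ ↥𝒜) (psiTop 𝒜) U ∧ K₀ ⊆ U ∧ Disjoint U K₁ := by
  classical
  letI := psiTop 𝒜
  have h0' : closure (interior K₀) = K₀ := h0
  have hK0 : IsClosed K₀ := h0' ▸ isClosed_closure
  have hK1 : IsClosed K₁ := by
    obtain ⟨n, f, hf, rfl⟩ := h1
    refine isClosed_iInter fun i => ?_
    have hfi : closure (interior (f i)) = f i := hf i
    exact hfi ▸ isClosed_closure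
  rcases hfin with hf | hf
  · exact psi_sep_lemma 𝒜 h𝒜 K₁ K₀ hd.symm hK1 hK0 hf
  · obtain ⟨V, hVo, hVc, hKV, hdV⟩ := psi_sep_lemma 𝒜 h𝒜 K₀ K₁ hd hK0 hK1 hf
    refine ⟨Vᶜ, hVc.isOpen_compl, isClosed_compl_iff.mpr hVo, ?_, ?_⟩
    · exact fun x hx hV => Set.disjoint_left.mp hdV hV hx
    · exact Set.disjoint_left.mpr fun x hx hK => hx (hKV hK)
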